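/- arXiv:2504.12373 — 2 statements merged into one kernel-verified Lean document; each statement's English description precedes it below -/
import Mathlib

section
/- (Hayashi's pinching inequality) Let ρ be a density matrix on a finite-dimensional Hilbert space and let P(ρ) = Σ_{j=1}^J Π_j ρ Π_j be the pinching with respect to orthogonal projectors {Π_j} summing to the identity. Then P(ρ) ≥ ρ/J in the positive semidefinite order. -/
open Matrix
open scoped ComplexOrder

lemma psd_smul_aux {ι : Type*} [Fintype ι] {M : Matrix ι ι ℂ} (hM : M.PosSemidef)
    (c : ℝ) (hc : 0 ≤ c) : ((c : ℂ) • M).PosSemidef := by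
  rw [posSemidef_iff_dotProduct_mulVec]
  constructor
  · unfold Matrix.IsHermitian
    rw [conjTranspose_smul, hM.1.eq]
    congr 1
    simp
  · intro x
    rw [smul_mulVec, dotProduct_smul, smul_eq_mul]
    exact mul_nonneg (by exact_mod_cast hc) (hM.dotProduct_mulVec_nonneg x)

lemma psd_sum_aux {ι κ : Type*} [Fintype ι] [Fintype κ] (f : κ → Matrix ι ι ℂ)
    (hf : ∀ k, (f k).PosSemidef) : (∑ k, f k).PosSemidef := by
  classical
  refine Finset.sum_induction f _ (fun a b ha hb => ha.add hb) Matrix.PosSemidef.zero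
    (fun k _ => hf k)

/-- Hayashi's pinching inequality: for a density matrix `ρ` and a pinching
with respect to `J` mutually orthogonal projectors summing to the identity,
`P(ρ) ≥ ρ / J` in the Loewner order. -/
theorem pinching_inequality
    {ι : Type*} [Fintype ι] [DecidableEq ι] (J : ℕ) (hJ : 0 < J)
    (P : Fin J → Matrix ι ι ℂ)
    (hproj : ∀ j, (P j)ᴴ = P j ∧ P j * P j = P j)
    (horth : ∀ j j', j ≠ j' → P j * P j' = 0)
    (hsum : ∑ j, P j = 1)
    (ρ : Matrix ι ι ℂ) (hρ : ρ.PosSemidef) (hρ1 : ρ.trace = 1) :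
    ((∑ j, P j * ρ * P j) - ((J : ℂ))⁻¹ • ρ).PosSemidef := by
  set S : Matrix ι ι ℂ := ∑ j, ∑ j', (P j - P j') * ρ * (P j - P j') with hS
  have hSpsd : S.PosSemidef := by
    refine psd_sum_aux _ fun j => psd_sum_aux _ fun j' => ?_
    have h : (P j - P j')ᴴ = P j - P j' := by
      rw [conjTranspose_sub, (hproj j).1, (hproj j').1]
    have := hρ.mul_mul_conjTranspose_same (P j - P j')
    rwa [h] at this
  have hSeq : S = (2 * (J : ℂ)) • (∑ j, P j * ρ * P j) - (2 : ℂ) • ρ := by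
    have expand : ∀ j j' : Fin J, (P j - P j') * ρ * (P j - P j') =
        P j * ρ * P j - P j * ρ * P j' - P j' * ρ * P j + P j' * ρ * P j' := by
      intro j j'; noncomm_ring
    rw [hS]
    simp_rw [expand, Finset.sum_add_distrib, Finset.sum_sub_distrib]
    have h1 : ∑ j : Fin J, ∑ j' : Fin J, P j * ρ * P j = (J : ℂ) • ∑ j, P j * ρ * P j := by
      simp [Finset.sum_const, Finset.card_univ, Nat.cast_smul_eq_nsmul ℂ, Finset.smul_sum]
    have h2 : ∑ j : Fin J, ∑ j' : Fin J, P j * ρ * P j' = ρ := by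
      have : ∀ j : Fin J, ∑ j' : Fin J, P j * ρ * P j' = P j * ρ := by
        intro j
        rw [← Finset.mul_sum, hsum, mul_one]
      simp_rw [this, ← Finset.sum_mul, hsum, one_mul]
    have h3 : ∑ j : Fin J, ∑ j' : Fin J, P j' * ρ * P j = ρ := by
      have : ∀ j : Fin J, ∑ j' : Fin J, P j' * ρ * P j = ρ * P j := by
        intro j
        simp_rw [← Finset.sum_mul, hsum, one_mul]
      simp_rw [this, ← Finset.mul_sum, hsum, mul_one]
    have h4 : ∑ j : Fin J, ∑ j' : Fin J, P j' * ρ * P j' = (J : ℂ) • ∑ j, P j * ρ * P j := by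
      rw [Finset.sum_comm]
      exact h1
    rw [h1, h2, h3, h4]
    module
  have hJC : (J : ℂ) ≠ 0 := Nat.cast_ne_zero.mpr hJ.ne'
  have key : (∑ j, P j * ρ * P j) - ((J : ℂ))⁻¹ • ρ = (2 * (J : ℂ))⁻¹ • S := by
    rw [hSeq, smul_sub, smul_smul, smul_smul]
    congr 1
    · rw [inv_mul_cancel₀ (mul_ne_zero two_ne_zero hJC), one_smul]
    · congr 1
      field_simp
  have hcast : (2 * (J : ℂ))⁻¹ = (((2 * (J : ℝ))⁻¹ : ℝ) : ℂ) := by push_cast; ring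
  rw [key, hcast]
  exact psd_smul_aux hSpsd _ (by positivity)
end

section
/- Let ρ, σ be density matrices on a finite-dimensional Hilbert space with supp(ρ) ⊆ supp(σ), and let P be a pinching channel with J projectors such that P(σ) = σ. Then 0 ≤ D(ρ‖P(ρ)) ≤ log J, where D denotes the Umegaki relative entropy. -/
set_option linter.unusedSectionVars false
set_option linter.unusedVariables false
set_option maxHeartbeats 2000000


open Matrix
open scoped ComplexOrder

/-- Matrix logarithm of a Hermitian matrix via its spectral decomposition, with the
convention `log 0 = 0` (i.e. the logarithm is taken on the support). -/
noncomputable def matLog {ι : Type*} [Fintype ι] [DecidableEq ι]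
    (A : Matrix ι ι ℂ) : Matrix ι ι ℂ :=
  if hA : A.IsHermitian then
    (hA.eigenvectorUnitary : Matrix ι ι ℂ) *
      Matrix.diagonal (fun i => (Real.log (hA.eigenvalues i) : ℂ)) *
      (hA.eigenvectorUnitary : Matrix ι ι ℂ)ᴴ
  else 0

/-- Umegaki relative entropy `D(ρ‖σ) = Tr[ρ log ρ − ρ log σ]`. -/
noncomputable def relEnt {ι : Type*} [Fintype ι] [DecidableEq ι]
    (ρ σ : Matrix ι ι ℂ) : ℝ :=
  ((ρ * matLog ρ).trace - (ρ * matLog σ).trace).re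

namespace PinchProof

variable {ι : Type*} [Fintype ι] [DecidableEq ι]

lemma dot_star_self_nonneg (v : ι → ℂ) : 0 ≤ star v ⬝ᵥ v :=
  Finset.sum_nonneg fun i _ => star_mul_self_nonneg (v i)

lemma herm_dot {M : Matrix ι ι ℂ} (hM : M.IsHermitian) (x w : ι → ℂ) :
    star x ⬝ᵥ M *ᵥ w = star (M *ᵥ x) ⬝ᵥ w := by
  rw [dotProduct_mulVec, star_mulVec, hM.eq]

lemma star_dot_one (x : ι → ℂ) : star (x) ⬝ᵥ x = ∑ j, (Complex.normSq (x j) : ℂ) := by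
  simp [dotProduct, Complex.normSq_eq_conj_mul_self]

lemma unitary_dot_comp (U : Matrix ι ι ℂ) (hU : U * Uᴴ = 1) (x : ι → ℂ) :
    star (Uᴴ *ᵥ x) ⬝ᵥ (Uᴴ *ᵥ x) = star x ⬝ᵥ x := by
  rw [star_mulVec, conjTranspose_conjTranspose, ← dotProduct_mulVec,
    mulVec_mulVec, hU, one_mulVec]

lemma coeff_sum (U : Matrix ι ι ℂ) (hU : U * Uᴴ = 1) (x : ι → ℂ)
    (hx : star x ⬝ᵥ x = 1) :
    ∑ j, Complex.normSq ((Uᴴ *ᵥ x) j) = 1 := by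
  have h := unitary_dot_comp U hU x
  rw [hx, star_dot_one] at h
  have : ((∑ j, Complex.normSq ((Uᴴ *ᵥ x) j) : ℝ) : ℂ) = ((1:ℝ):ℂ) := by
    push_cast
    simpa using h
  exact_mod_cast this

lemma qf_diag (W : Matrix ι ι ℂ) (d : ι → ℂ) (v : ι → ℂ) :
    star v ⬝ᵥ (W * diagonal d * Wᴴ) *ᵥ v
      = ∑ j, d j * ((star ((Wᴴ *ᵥ v) j)) * (Wᴴ *ᵥ v) j) := by
  have h1 : (W * diagonal d * Wᴴ) *ᵥ v = W *ᵥ (diagonal d *ᵥ (Wᴴ *ᵥ v)) := by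
    simp [mulVec_mulVec, Matrix.mul_assoc]
  rw [h1, dotProduct_mulVec, show star v ᵥ* W = star (Wᴴ *ᵥ v) by
    rw [star_mulVec, conjTranspose_conjTranspose]]
  simp [dotProduct, mulVec_diagonal]
  exact Finset.sum_congr rfl fun j _ => by ring

lemma trace_diagonal_mul (d : ι → ℂ) (N : Matrix ι ι ℂ) :
    (diagonal d * N).trace = ∑ i, d i * N i i := by
  simp [Matrix.trace, Matrix.diag, Matrix.mul_apply, diagonal_apply, Finset.sum_ite_eq]

lemma trace_mul_eigen {ρ : Matrix ι ι ℂ} (h : ρ.IsHermitian) (X : Matrix ι ι ℂ) :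
    (ρ * X).trace = ∑ i, (h.eigenvalues i : ℂ) *
      (star ⇑(h.eigenvectorBasis i) ⬝ᵥ X *ᵥ ⇑(h.eigenvectorBasis i)) := by
  set U : Matrix ι ι ℂ := (h.eigenvectorUnitary : Matrix ι ι ℂ) with hU
  have hsp : ρ = U * diagonal (RCLike.ofReal ∘ h.eigenvalues) * Uᴴ := by
    rw [← Matrix.star_eq_conjTranspose]; exact h.spectral_theorem
  have h1 : (ρ * X).trace = (diagonal (RCLike.ofReal ∘ h.eigenvalues) * (Uᴴ * X * U)).trace := by
    conv_lhs => rw [hsp]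
    rw [Matrix.mul_assoc, Matrix.mul_assoc, Matrix.trace_mul_comm]
    simp [Matrix.mul_assoc]
  rw [h1, trace_diagonal_mul]
  refine Finset.sum_congr rfl fun i _ => ?_
  have h2 : (RCLike.ofReal ∘ h.eigenvalues) i = ((h.eigenvalues i : ℝ) : ℂ) := rfl
  rw [h2]
  congr 1
  simp only [Matrix.mul_apply, conjTranspose_apply, dotProduct, Matrix.mulVec,
    Finset.sum_mul, Finset.mul_sum, Pi.star_apply]
  rw [Finset.sum_comm]
  refine Finset.sum_congr rfl fun l _ => ?_
  refine Finset.sum_congr rfl fun k _ => ?_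
  have h3 : ∀ m : ι, U m i = ⇑(h.eigenvectorBasis i) m := fun m => rfl
  rw [← h3, ← h3]
  ring

lemma sum_dot_le {J : ℕ} (y : Fin J → ι → ℂ) :
    star (∑ j, y j) ⬝ᵥ (∑ j, y j) ≤ (J:ℂ) * ∑ j, star (y j) ⬝ᵥ y j := by
  have key : (0:ℂ) ≤ ∑ j, ∑ k, star (y j - y k) ⬝ᵥ (y j - y k) :=
    Finset.sum_nonneg fun j _ => Finset.sum_nonneg fun k _ => dot_star_self_nonneg _
  have expand : ∑ j, ∑ k, star (y j - y k) ⬝ᵥ (y j - y k)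
      = 2 * ((J:ℂ) * ∑ j, star (y j) ⬝ᵥ y j - star (∑ j, y j) ⬝ᵥ (∑ j, y j)) := by
    have e1 : ∀ j k, star (y j - y k) ⬝ᵥ (y j - y k)
        = star (y j) ⬝ᵥ y j - star (y j) ⬝ᵥ y k - star (y k) ⬝ᵥ y j + star (y k) ⬝ᵥ y k := by
      intro j k
      simp only [star_sub, sub_dotProduct, dotProduct_sub]
      ring
    simp only [e1]
    have sum_dot : ∀ (f : Fin J → ι → ℂ) (w : ι → ℂ),
        (∑ j, f j) ⬝ᵥ w = ∑ j, f j ⬝ᵥ w := by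
      intro f w
      simp only [dotProduct, Finset.sum_apply, Finset.sum_mul]
      exact Finset.sum_comm
    have dot_sum : ∀ (v : ι → ℂ) (f : Fin J → ι → ℂ),
        v ⬝ᵥ (∑ j, f j) = ∑ j, v ⬝ᵥ f j := by
      intro v f
      simp only [dotProduct, Finset.sum_apply, Finset.mul_sum]
      exact Finset.sum_comm
    have e2 : star (∑ j, y j) ⬝ᵥ (∑ j, y j) = ∑ j, ∑ k, star (y j) ⬝ᵥ y k := by
      rw [star_sum, sum_dot]
      exact Finset.sum_congr rfl fun j _ => dot_sum _ _
    have e3 : ∑ j : Fin J, ∑ k : Fin J, star (y k) ⬝ᵥ y j = ∑ j, ∑ k, star (y j) ⬝ᵥ y k :=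
      Finset.sum_comm
    simp only [Finset.sum_add_distrib, Finset.sum_sub_distrib, Finset.sum_const,
      Finset.card_univ, Fintype.card_fin, nsmul_eq_mul, e2, e3]
    rw [← Finset.mul_sum]
    ring
  rw [expand] at key
  have h2 : (0:ℂ) ≤ (2:ℂ)⁻¹ := by
    rw [show ((2:ℂ)⁻¹) = ((2⁻¹ : ℝ) : ℂ) by push_cast; ring]
    exact_mod_cast (by norm_num : (0:ℝ) ≤ 2⁻¹)
  have h3 := mul_nonneg h2 key
  rw [← mul_assoc, inv_mul_cancel₀ (by norm_num : (2:ℂ) ≠ 0), one_mul] at h3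
  exact sub_nonneg.mp h3

lemma inv_antitone {A B : Matrix ι ι ℂ} (hA : A.PosDef) (hB : B.PosDef)
    (hAB : ∀ x, star x ⬝ᵥ A *ᵥ x ≤ star x ⬝ᵥ B *ᵥ x) (v : ι → ℂ) :
    star v ⬝ᵥ B⁻¹ *ᵥ v ≤ star v ⬝ᵥ A⁻¹ *ᵥ v := by
  have hAdet : IsUnit A.det := (Matrix.isUnit_iff_isUnit_det A).mp hA.isUnit
  have hBdet : IsUnit B.det := (Matrix.isUnit_iff_isUnit_det B).mp hB.isUnit
  set w := B⁻¹ *ᵥ v with hw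
  set u := A⁻¹ *ᵥ v with hu
  have hAu : A *ᵥ u = v := by
    rw [hu, mulVec_mulVec, Matrix.mul_nonsing_inv A hAdet, one_mulVec]
  have hBw : B *ᵥ w = v := by
    rw [hw, mulVec_mulVec, Matrix.mul_nonsing_inv B hBdet, one_mulVec]
  have key : (0:ℂ) ≤ star (w - u) ⬝ᵥ A *ᵥ (w - u) := hA.posSemidef.dotProduct_mulVec_nonneg _
  have expand : star (w - u) ⬝ᵥ A *ᵥ (w - u)
      = star w ⬝ᵥ A *ᵥ w - star w ⬝ᵥ v - star v ⬝ᵥ w + star v ⬝ᵥ A⁻¹ *ᵥ v := by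
    have h1 : star u ⬝ᵥ A *ᵥ w = star v ⬝ᵥ w := by
      rw [herm_dot hA.isHermitian, hAu]
    have h2 : star u ⬝ᵥ A *ᵥ u = star v ⬝ᵥ u := by
      rw [herm_dot hA.isHermitian, hAu]
    have h3 : star w ⬝ᵥ A *ᵥ u = star w ⬝ᵥ v := by rw [hAu]
    simp only [star_sub, sub_dotProduct, dotProduct_sub, mulVec_sub, h1, h2, h3]
    simp only [hu]
    ring
  have hq : star w ⬝ᵥ A *ᵥ w ≤ star w ⬝ᵥ v := by
    have := hAB w
    rwa [hBw] at this
  have h5 : (0:ℂ) ≤ star w ⬝ᵥ v - star w ⬝ᵥ v - star v ⬝ᵥ w + star v ⬝ᵥ A⁻¹ *ᵥ v := by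
    refine le_trans (key.trans_eq expand) ?_
    exact add_le_add_left (sub_le_sub_right (sub_le_sub_right hq (star w ⬝ᵥ v))
      (star v ⬝ᵥ w)) (star v ⬝ᵥ A⁻¹ *ᵥ v)
  have h4 : star w ⬝ᵥ v - star w ⬝ᵥ v - star v ⬝ᵥ w + star v ⬝ᵥ A⁻¹ *ᵥ v
      = star v ⬝ᵥ A⁻¹ *ᵥ v - star v ⬝ᵥ B⁻¹ *ᵥ v := by rw [hw]; ring
  rw [h4] at h5
  exact sub_nonneg.mp h5

lemma eigvec_unit {A : Matrix ι ι ℂ} (hA : A.IsHermitian) (i : ι) :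
    star ⇑(hA.eigenvectorBasis i) ⬝ᵥ ⇑(hA.eigenvectorBasis i) = 1 := by
  set U : Matrix ι ι ℂ := (hA.eigenvectorUnitary : Matrix ι ι ℂ) with hU
  have h1 : U *ᵥ Pi.single i 1 = ⇑(hA.eigenvectorBasis i) :=
    hA.eigenvectorUnitary_mulVec i
  have h2 : Uᴴ *ᵥ ⇑(hA.eigenvectorBasis i) = Pi.single i 1 := by
    rw [hU, ← Matrix.star_eq_conjTranspose]
    exact hA.star_eigenvectorUnitary_mulVec i
  calc star ⇑(hA.eigenvectorBasis i) ⬝ᵥ ⇑(hA.eigenvectorBasis i)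
      = star ⇑(hA.eigenvectorBasis i) ⬝ᵥ (U *ᵥ Pi.single i 1) := by rw [h1]
    _ = (star ⇑(hA.eigenvectorBasis i) ᵥ* U) ⬝ᵥ Pi.single i 1 := by
        rw [dotProduct_mulVec]
    _ = star (Uᴴ *ᵥ ⇑(hA.eigenvectorBasis i)) ⬝ᵥ Pi.single i 1 := by
        rw [star_mulVec, conjTranspose_conjTranspose]
    _ = star (Pi.single i 1 : ι → ℂ) ⬝ᵥ (Pi.single i 1 : ι → ℂ) := by rw [h2]
    _ = 1 := by simp [dotProduct, Pi.single_apply, apply_ite]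

lemma trace_eq_sum_eig {A : Matrix ι ι ℂ} (hA : A.IsHermitian) :
    A.trace = ((∑ i, hA.eigenvalues i : ℝ) : ℂ) := by
  have h := trace_mul_eigen hA 1
  rw [Matrix.mul_one] at h
  rw [h]
  push_cast
  refine Finset.sum_congr rfl fun i _ => ?_
  rw [one_mulVec, eigvec_unit hA i, mul_one]

lemma real_smul_fun (r : ℝ) (f : ι → ℂ) : r • f = ((r:ℂ)) • f := by
  funext k
  simp [Complex.real_smul]

lemma klein_term (p q e : ℝ) (hp : 0 ≤ p) (hq : 0 ≤ q) (he : 0 ≤ e)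
    (hz : q = 0 → p * e = 0) :
    p * e - e * q ≤ p * e * (Real.log p - Real.log q) := by
  rcases eq_or_lt_of_le hp with hp0 | hp0
  · rw [← hp0]
    have : 0 ≤ e * q := mul_nonneg he hq
    nlinarith
  rcases eq_or_lt_of_le hq with hq0 | hq0
  · have he0 : e = 0 := by
      have := hz hq0.symm
      rcases mul_eq_zero.mp this with h | h
      · exact absurd h (ne_of_gt hp0)
      · exact h
    simp [he0, ← hq0]
  · have h := Real.log_le_sub_one_of_pos (div_pos hq0 hp0)
    rw [Real.log_div (ne_of_gt hq0) (ne_of_gt hp0)] at h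
    have h2 : p - q ≤ p * (Real.log p - Real.log q) := by
      have h3 := mul_le_mul_of_nonneg_left h (le_of_lt hp0)
      have h4 : p * (q / p - 1) = q - p := by
        field_simp
      rw [h4] at h3
      linarith
    calc p * e - e * q = e * (p - q) := by ring
      _ ≤ e * (p * (Real.log p - Real.log q)) := mul_le_mul_of_nonneg_left h2 he
      _ = p * e * (Real.log p - Real.log q) := by ring

open Filter in
lemma scalar_key_pos {n : Type*} [Fintype n] (d q : n → ℝ) (a : ℝ) (ha : 0 < a)
    (hq : ∀ j, 0 < q j) (hsum : ∑ j, d j = 1)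
    (hcmp : ∀ t : ℝ, 0 < t → ∑ j, d j / (q j + t) ≤ 1 / (a + t)) :
    Real.log a ≤ ∑ j, d j * Real.log (q j) := by
  set G : ℝ → ℝ := fun T => (∑ j, d j * Real.log (q j + T)) - Real.log (a + T) with hG
  have hderiv : ∀ T : ℝ, 0 ≤ T →
      HasDerivAt G ((∑ j, d j / (q j + T)) - 1 / (a + T)) T := by
    intro T hT
    have h1 : HasDerivAt (fun T : ℝ => ∑ j, d j * Real.log (q j + T))
        (∑ j, d j / (q j + T)) T := by
      refine HasDerivAt.fun_sum fun j _ => ?_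
      have hlog : HasDerivAt (fun T : ℝ => Real.log (q j + T)) ((q j + T)⁻¹) T := by
        have hne : q j + T ≠ 0 := ne_of_gt (add_pos_of_pos_of_nonneg (hq j) hT)
        have hid : HasDerivAt (fun T : ℝ => q j + T) 1 T := by
          simpa using (hasDerivAt_id T).const_add (q j)
        simpa [Function.comp_def] using (Real.hasDerivAt_log hne).comp T hid
      simpa [div_eq_mul_inv] using hlog.const_mul (d j)
    have h2 : HasDerivAt (fun T : ℝ => Real.log (a + T)) (1 / (a + T)) T := by
      have hne : a + T ≠ 0 := ne_of_gt (add_pos_of_pos_of_nonneg ha hT)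
      have hid : HasDerivAt (fun T : ℝ => a + T) 1 T := by
        simpa using (hasDerivAt_id T).const_add a
      simpa [one_div, Function.comp_def] using (Real.hasDerivAt_log hne).comp T hid
    exact h1.sub h2
  have hanti : AntitoneOn G (Set.Ici (0:ℝ)) := by
    refine antitoneOn_of_deriv_nonpos (convex_Ici 0) ?_ ?_ ?_
    · exact fun T hT => ((hderiv T hT).continuousAt).continuousWithinAt
    · intro T hT
      rw [interior_Ici] at hT
      exact ((hderiv T (le_of_lt hT)).differentiableAt).differentiableWithinAt
    · intro T hT
      rw [interior_Ici] at hT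
      rw [(hderiv T (le_of_lt hT)).deriv]
      have := hcmp T hT
      linarith
  have htend : Tendsto G atTop (nhds 0) := by
    have hG2 : ∀ T : ℝ, 0 < T →
        G T = ∑ j, d j * (Real.log (q j + T) - Real.log (a + T)) := by
      intro T hT
      have expand : ∑ j, d j * (Real.log (q j + T) - Real.log (a + T))
          = (∑ j, d j * Real.log (q j + T)) - (∑ j, d j) * Real.log (a + T) := by
        rw [Finset.sum_mul, ← Finset.sum_sub_distrib]
        exact Finset.sum_congr rfl fun j _ => by ring
      rw [hG]
      simp only [expand, hsum, one_mul]
    have hterm : ∀ j, Tendsto (fun T => Real.log (q j + T) - Real.log (a + T))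
        atTop (nhds 0) := by
      intro j
      have hratio : Tendsto (fun T : ℝ => (q j + T) / (a + T)) atTop (nhds 1) := by
        have h1 : Tendsto (fun T : ℝ => (q j - a) / (a + T)) atTop (nhds 0) := by
          apply Tendsto.div_atTop (tendsto_const_nhds)
          exact tendsto_atTop_add_const_left _ a tendsto_id
        have h2 : Tendsto (fun T : ℝ => 1 + (q j - a) / (a + T)) atTop (nhds 1) := by
          simpa using tendsto_const_nhds.add h1
        refine h2.congr' ?_
        filter_upwards [eventually_gt_atTop 0] with T hT
        have hne : a + T ≠ 0 := ne_of_gt (add_pos ha hT)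
        field_simp
        ring
      have hlog : Tendsto (fun T : ℝ => Real.log ((q j + T) / (a + T))) atTop (nhds 0) := by
        have := (Real.continuousAt_log (one_ne_zero)).tendsto.comp hratio
        simpa [Function.comp_def] using this
      refine hlog.congr' ?_
      filter_upwards [eventually_gt_atTop 0] with T hT
      have h1 : q j + T ≠ 0 := ne_of_gt (add_pos (hq j) hT)
      have h2 : a + T ≠ 0 := ne_of_gt (add_pos ha hT)
      rw [Real.log_div h1 h2]
    have hsumtend : Tendsto (fun T => ∑ j, d j * (Real.log (q j + T) - Real.log (a + T)))
        atTop (nhds 0) := by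
      have := tendsto_finset_sum (Finset.univ)
        (fun j (_ : j ∈ Finset.univ) => (hterm j).const_mul (d j))
      simpa using this
    refine hsumtend.congr' ?_
    filter_upwards [eventually_gt_atTop 0] with T hT
    exact (hG2 T hT).symm
  have hG0 : 0 ≤ G 0 := by
    refine le_of_tendsto htend ?_
    filter_upwards [eventually_ge_atTop 0] with T hT
    exact hanti (Set.mem_Ici.mpr le_rfl) (Set.mem_Ici.mpr hT) hT
  rw [hG] at hG0
  simp only [add_zero] at hG0
  linarith

lemma scalar_key {n : Type*} [Fintype n] (d q : n → ℝ) (a : ℝ) (ha : 0 < a)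
    (hq : ∀ j, 0 ≤ q j) (hz : ∀ j, q j = 0 → d j = 0) (hsum : ∑ j, d j = 1)
    (hcmp : ∀ t : ℝ, 0 < t → ∑ j, d j / (q j + t) ≤ 1 / (a + t)) :
    Real.log a ≤ ∑ j, d j * Real.log (q j) := by
  set q' : n → ℝ := fun j => if d j = 0 then 1 else q j with hq'
  have hq'pos : ∀ j, 0 < q' j := by
    intro j
    rw [hq']
    by_cases h : d j = 0
    · simp [h]
    · simp only [h, if_false]
      rcases lt_or_eq_of_le (hq j) with h1 | h1
      · exact h1
      · exact absurd (hz j h1.symm) h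
  have key := scalar_key_pos d q' a ha hq'pos hsum ?_
  · refine le_trans key (le_of_eq ?_)
    refine Finset.sum_congr rfl fun j _ => ?_
    by_cases h : d j = 0
    · simp [h]
    · rw [hq']; simp [h]
  · intro t ht
    refine le_trans (le_of_eq ?_) (hcmp t ht)
    refine Finset.sum_congr rfl fun j _ => ?_
    by_cases h : d j = 0
    · simp [h]
    · rw [hq']; simp [h]

end PinchProof

open PinchProof in
/-- For density matrices `ρ, σ` with `supp ρ ⊆ supp σ` and a pinching channel
`P` with `J` projectors fixing `σ`, one has `0 ≤ D(ρ‖P(ρ)) ≤ log J`. -/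
theorem relEnt_pinching_le_log
    {ι : Type*} [Fintype ι] [DecidableEq ι] (J : ℕ) (hJ : 0 < J)
    (P : Fin J → Matrix ι ι ℂ)
    (hproj : ∀ j, (P j)ᴴ = P j ∧ P j * P j = P j)
    (horth : ∀ j j', j ≠ j' → P j * P j' = 0)
    (hsum : ∑ j, P j = 1)
    (ρ σ : Matrix ι ι ℂ)
    (hρ : ρ.PosSemidef) (hρ1 : ρ.trace = 1)
    (hσ : σ.PosSemidef) (hσ1 : σ.trace = 1)
    (hsupp : ∀ v, σ.mulVec v = 0 → ρ.mulVec v = 0)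
    (hfix : ∑ j, P j * σ * P j = σ) :
    0 ≤ relEnt ρ (∑ j, P j * ρ * P j) ∧
      relEnt ρ (∑ j, P j * ρ * P j) ≤ Real.log J := by

  classical
  have hρH : ρ.IsHermitian := hρ.1
  set τ : Matrix ι ι ℂ := ∑ j, P j * ρ * P j with hτdef
  have hτpsd : τ.PosSemidef := by
    rw [hτdef]
    refine Finset.sum_induction _ _ (fun a b ha hb => ha.add hb) Matrix.PosSemidef.zero ?_
    intro j _
    have h := hρ.mul_mul_conjTranspose_same (P j)
    rwa [(hproj j).1] at h
  have hτH : τ.IsHermitian := hτpsd.1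
  set p : ι → ℝ := hρH.eigenvalues with hpdef
  set q : ι → ℝ := hτH.eigenvalues with hqdef
  set v : ι → ι → ℂ := fun i => ⇑(hρH.eigenvectorBasis i) with hvdef
  set w : ι → ι → ℂ := fun j => ⇑(hτH.eigenvectorBasis j) with hwdef
  set Vm : Matrix ι ι ℂ := (hρH.eigenvectorUnitary : Matrix ι ι ℂ) with hVmdef
  set Wm : Matrix ι ι ℂ := (hτH.eigenvectorUnitary : Matrix ι ι ℂ) with hWmdef
  have hWW : Wm * Wmᴴ = 1 := by
    rw [hWmdef, ← Matrix.star_eq_conjTranspose]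
    exact (Matrix.mem_unitaryGroup_iff).mp (hτH.eigenvectorUnitary).2
  have hWW' : Wmᴴ * Wm = 1 := by
    rw [hWmdef, ← Matrix.star_eq_conjTranspose]
    exact (Matrix.mem_unitaryGroup_iff').mp (hτH.eigenvectorUnitary).2
  have hVV : Vm * Vmᴴ = 1 := by
    rw [hVmdef, ← Matrix.star_eq_conjTranspose]
    exact (Matrix.mem_unitaryGroup_iff).mp (hρH.eigenvectorUnitary).2
  set c : ι → ι → ℂ := fun i => Wmᴴ *ᵥ v i with hcdef
  set e : ι → ι → ℝ := fun j i => Complex.normSq (c i j) with hedef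
  have hvunit : ∀ i, star (v i) ⬝ᵥ v i = 1 := fun i => eigvec_unit hρH i
  have hwunit : ∀ j, star (w j) ⬝ᵥ w j = 1 := fun j => eigvec_unit hτH j
  have hp_nonneg : ∀ i, 0 ≤ p i := fun i => hρ.eigenvalues_nonneg i
  have hq_nonneg : ∀ j, 0 ≤ q j := fun j => hτpsd.eigenvalues_nonneg j
  have he_nonneg : ∀ j i, 0 ≤ e j i := fun j i => Complex.normSq_nonneg _
  -- row sums of e
  have herow : ∀ i, ∑ j, e j i = 1 := by
    intro i
    have h := coeff_sum Wm hWW (v i) (hvunit i)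
    simpa [hedef, hcdef] using h
  -- c as dot product
  have hcdot : ∀ i j, c i j = star (w j) ⬝ᵥ v i := by
    intro i j
    rfl
  -- column sums of e
  have hecol : ∀ j, ∑ i, e j i = 1 := by
    intro j
    have h := coeff_sum Vm hVV (w j) (hwunit j)
    refine Eq.trans (Finset.sum_congr rfl fun i _ => ?_) h
    have h1 : (Vmᴴ *ᵥ w j) i = star (v i) ⬝ᵥ w j := rfl
    have h2 : star (v i) ⬝ᵥ w j = star (star (w j) ⬝ᵥ v i) := Matrix.star_dotProduct _ _
    rw [hedef]
    simp only []
    rw [hcdot i j, h1, h2]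
    rw [show (star (star (w j) ⬝ᵥ v i) : ℂ) = (starRingEnd ℂ) (star (w j) ⬝ᵥ v i) from rfl,
      Complex.normSq_conj]
  -- traces and sums of eigenvalues
  have hsum_p : ∑ i, p i = 1 := by
    have h := trace_eq_sum_eig hρH
    rw [hρ1] at h
    exact_mod_cast h.symm
  have hτtr : τ.trace = 1 := by
    rw [hτdef, Matrix.trace_sum]
    have h1 : ∀ j, (P j * ρ * P j).trace = (P j * ρ).trace := by
      intro j
      rw [Matrix.trace_mul_comm, ← Matrix.mul_assoc, (hproj j).2]
    simp only [h1]
    rw [← Matrix.trace_sum, ← Finset.sum_mul, hsum, Matrix.one_mul, hρ1]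
  have hsum_q : ∑ j, q j = 1 := by
    have h := trace_eq_sum_eig hτH
    rw [hτtr] at h
    exact_mod_cast h.symm
  -- pinching inequality
  have hpin : ∀ x : ι → ℂ, star x ⬝ᵥ ρ *ᵥ x ≤ (J:ℂ) * (star x ⬝ᵥ τ *ᵥ x) := by
    intro x
    open scoped MatrixOrder in set S := CFC.sqrt ρ with hSdef
    open scoped MatrixOrder in have hSmul : S * S = ρ := CFC.sqrt_mul_sqrt_self ρ hρ.nonneg
    open scoped MatrixOrder in have hSH : S.IsHermitian := (CFC.sqrt_nonneg ρ).posSemidef.1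
    set y : Fin J → ι → ℂ := fun j => S *ᵥ (P j *ᵥ x) with hydef
    have hsum_mv : ∀ (f : Fin J → Matrix ι ι ℂ) (z : ι → ℂ),
        (∑ j, f j) *ᵥ z = ∑ j, f j *ᵥ z := by
      intro f z
      funext k
      simp only [Matrix.mulVec, dotProduct, Finset.sum_apply, Matrix.sum_apply,
        Finset.sum_mul]
      exact Finset.sum_comm
    have hmv_sum : ∀ (M : Matrix ι ι ℂ) (f : Fin J → ι → ℂ),
        M *ᵥ (∑ j, f j) = ∑ j, M *ᵥ f j := by
      intro M f
      funext k
      simp only [Matrix.mulVec, dotProduct, Finset.sum_apply, Finset.mul_sum]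
      exact Finset.sum_comm
    have hdot_sum : ∀ (z : ι → ℂ) (f : Fin J → ι → ℂ),
        z ⬝ᵥ (∑ j, f j) = ∑ j, z ⬝ᵥ f j := by
      intro z f
      simp only [dotProduct, Finset.sum_apply, Finset.mul_sum]
      exact Finset.sum_comm
    have hsumy : S *ᵥ x = ∑ j, y j := by
      have hx : x = ∑ j, P j *ᵥ x := by
        rw [← hsum_mv, hsum, one_mulVec]
      conv_lhs => rw [hx]
      rw [hmv_sum]
    have hqρ : star x ⬝ᵥ ρ *ᵥ x = star (S *ᵥ x) ⬝ᵥ (S *ᵥ x) := by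
      rw [← hSmul, ← mulVec_mulVec, herm_dot hSH]
    have hqτ : star x ⬝ᵥ τ *ᵥ x = ∑ j, star (y j) ⬝ᵥ (y j) := by
      rw [hτdef, hsum_mv, hdot_sum]
      refine Finset.sum_congr rfl fun j _ => ?_
      have h1 : (P j * ρ * P j) *ᵥ x = P j *ᵥ (ρ *ᵥ (P j *ᵥ x)) := by
        rw [mulVec_mulVec, mulVec_mulVec]
      have hPH : (P j).IsHermitian := (hproj j).1
      rw [h1]
      rw [show star x ⬝ᵥ P j *ᵥ (ρ *ᵥ (P j *ᵥ x))
          = star (P j *ᵥ x) ⬝ᵥ (ρ *ᵥ (P j *ᵥ x)) from by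
        rw [dotProduct_mulVec, star_mulVec, hPH.eq]]
      rw [hydef]
      simp only []
      rw [← hSmul, ← mulVec_mulVec, herm_dot hSH]
    rw [hqρ, hqτ, hsumy]
    exact sum_dot_le y
  -- zero eigenvalue support facts
  have hze : ∀ j, q j = 0 → ρ *ᵥ w j = 0 := by
    intro j hqj
    have h1 : τ *ᵥ w j = 0 := by
      have h := hτH.mulVec_eigenvectorBasis j
      rw [show hτH.eigenvalues j = q j from rfl, hqj, zero_smul] at h
      exact h
    have h2 : star (w j) ⬝ᵥ ρ *ᵥ w j = 0 := by
      have hup := hpin (w j)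
      rw [h1, dotProduct_zero, mul_zero] at hup
      exact le_antisymm hup (hρ.dotProduct_mulVec_nonneg (w j))
    exact (hρ.dotProduct_mulVec_zero_iff (w j)).mp h2
  have hρv : ∀ i, ρ *ᵥ v i = ((p i : ℝ):ℂ) • v i := by
    intro i
    have h := hρH.mulVec_eigenvectorBasis i
    rw [show hρH.eigenvalues i = p i from rfl] at h
    rw [show ρ *ᵥ v i = ρ *ᵥ ⇑(hρH.eigenvectorBasis i) from rfl, h,
      ← real_smul_fun]
  have hpe : ∀ j i, q j = 0 → p i * e j i = 0 := by
    intro j i hqj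
    have h3 : ((p i : ℝ):ℂ) * c i j = 0 := by
      calc ((p i : ℝ):ℂ) * c i j = star (w j) ⬝ᵥ (((p i : ℝ):ℂ) • v i) := by
            rw [hcdot i j, dotProduct_smul, smul_eq_mul]
        _ = star (w j) ⬝ᵥ ρ *ᵥ v i := by rw [← hρv]
        _ = star (ρ *ᵥ w j) ⬝ᵥ v i := herm_dot hρH _ _
        _ = 0 := by rw [hze j hqj]; simp
    rcases mul_eq_zero.mp h3 with h | h
    · have : p i = 0 := by exact_mod_cast h
      rw [this, zero_mul]
    · rw [hedef]
      simp only []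
      rw [h, Complex.normSq_zero, mul_zero]
  -- matLog formulas
  have hlogρ : matLog ρ = Vm * diagonal (fun i => (Real.log (p i) : ℂ)) * Vmᴴ := by
    rw [matLog, dif_pos hρH]
  have hlogτ : matLog τ = Wm * diagonal (fun j => (Real.log (q j) : ℂ)) * Wmᴴ := by
    rw [matLog, dif_pos hτH]
  -- quadratic forms of the logs
  have hqlρ : ∀ i, star (v i) ⬝ᵥ (matLog ρ) *ᵥ v i = ((Real.log (p i) : ℝ) : ℂ) := by
    intro i
    rw [hlogρ, qf_diag]
    have hsingle : Vmᴴ *ᵥ v i = Pi.single i 1 := by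
      rw [hVmdef, ← Matrix.star_eq_conjTranspose]
      exact hρH.star_eigenvectorUnitary_mulVec i
    rw [hsingle]
    rw [Finset.sum_eq_single i]
    · simp
    · intro b _ hb
      simp [Pi.single_apply, hb]
    · intro hmem
      exact absurd (Finset.mem_univ i) hmem
  have hqlτ : ∀ i, star (v i) ⬝ᵥ (matLog τ) *ᵥ v i
      = ((∑ j, e j i * Real.log (q j) : ℝ) : ℂ) := by
    intro i
    rw [hlogτ, qf_diag]
    push_cast
    refine Finset.sum_congr rfl fun j _ => ?_
    have h1 : (star ((Wmᴴ *ᵥ v i) j) * (Wmᴴ *ᵥ v i) j) = ((e j i : ℝ):ℂ) := by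
      rw [hedef]
      simp only []
      rw [show (Wmᴴ *ᵥ v i) j = c i j from rfl]
      rw [Complex.normSq_eq_conj_mul_self]
      rfl
    rw [h1]
    ring
  -- trace values
  have htr1 : (ρ * matLog ρ).trace = ((∑ i, p i * Real.log (p i) : ℝ) : ℂ) := by
    rw [trace_mul_eigen hρH]
    push_cast
    refine Finset.sum_congr rfl fun i _ => ?_
    rw [show star ⇑(hρH.eigenvectorBasis i) ⬝ᵥ matLog ρ *ᵥ ⇑(hρH.eigenvectorBasis i)
        = star (v i) ⬝ᵥ matLog ρ *ᵥ v i from rfl, hqlρ i]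
  have htr2 : (ρ * matLog τ).trace
      = ((∑ i, p i * (∑ j, e j i * Real.log (q j)) : ℝ) : ℂ) := by
    rw [trace_mul_eigen hρH]
    push_cast
    refine Finset.sum_congr rfl fun i _ => ?_
    rw [show star ⇑(hρH.eigenvectorBasis i) ⬝ᵥ matLog τ *ᵥ ⇑(hρH.eigenvectorBasis i)
        = star (v i) ⬝ᵥ matLog τ *ᵥ v i from rfl, hqlτ i]
    push_cast
    ring
  have hD : relEnt ρ τ = (∑ i, p i * Real.log (p i))
      - ∑ i, p i * (∑ j, e j i * Real.log (q j)) := by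
    rw [relEnt, htr1, htr2, ← Complex.ofReal_sub, Complex.ofReal_re]
  constructor
  · -- lower bound: Klein inequality
    rw [hD]
    have hrew : (∑ i, p i * Real.log (p i)) - ∑ i, p i * (∑ j, e j i * Real.log (q j))
        = ∑ i, ∑ j, (p i * e j i * (Real.log (p i) - Real.log (q j))) := by
      rw [← Finset.sum_sub_distrib]
      refine Finset.sum_congr rfl fun i _ => ?_
      calc p i * Real.log (p i) - p i * ∑ j, e j i * Real.log (q j)
          = (∑ j, e j i) * (p i * Real.log (p i)) - ∑ j, p i * (e j i * Real.log (q j)) := by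
            rw [herow i, one_mul, Finset.mul_sum]
        _ = ∑ j, (e j i * (p i * Real.log (p i))) - ∑ j, p i * (e j i * Real.log (q j)) := by
            rw [Finset.sum_mul]
        _ = ∑ j, (p i * e j i * (Real.log (p i) - Real.log (q j))) := by
            rw [← Finset.sum_sub_distrib]
            exact Finset.sum_congr rfl fun j _ => by ring
    rw [hrew]
    have hlower : ∑ i, ∑ j, (p i * e j i - e j i * q j)
        ≤ ∑ i, ∑ j, (p i * e j i * (Real.log (p i) - Real.log (q j))) := by
      refine Finset.sum_le_sum fun i _ => Finset.sum_le_sum fun j _ => ?_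
      exact klein_term (p i) (q j) (e j i) (hp_nonneg i) (hq_nonneg j)
        (he_nonneg j i) (hpe j i)
    have hzero : ∑ i, ∑ j, (p i * e j i - e j i * q j) = 0 := by
      simp only [Finset.sum_sub_distrib]
      have h1 : ∑ i, ∑ j, p i * e j i = 1 := by
        calc ∑ i, ∑ j, p i * e j i = ∑ i, p i * ∑ j, e j i := by
              exact Finset.sum_congr rfl fun i _ => (Finset.mul_sum _ _ _).symm
          _ = ∑ i, p i := by
              refine Finset.sum_congr rfl fun i _ => by rw [herow i, mul_one]
          _ = 1 := hsum_p
      have h2 : ∑ i, ∑ j, e j i * q j = 1 := by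
        rw [Finset.sum_comm]
        calc ∑ j, ∑ i, e j i * q j = ∑ j, (∑ i, e j i) * q j := by
              exact Finset.sum_congr rfl fun j _ => (Finset.sum_mul _ _ _).symm
          _ = ∑ j, q j := by
              refine Finset.sum_congr rfl fun j _ => by rw [hecol j, one_mul]
          _ = 1 := hsum_q
      rw [h1, h2, sub_self]
    linarith
  · -- upper bound
    rw [hD]
    have hupp : ∀ i, p i * (Real.log (p i) - Real.log J)
        ≤ p i * (∑ j, e j i * Real.log (q j)) := by
      intro i
      rcases eq_or_lt_of_le (hp_nonneg i) with h0 | h0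
      · rw [← h0]
        simp
      · have hJR : (0:ℝ) < (J:ℝ) := by exact_mod_cast hJ
        have ha : 0 < p i / J := div_pos h0 hJR
        have hcmp : ∀ t : ℝ, 0 < t →
            ∑ j, e j i / (q j + t) ≤ 1 / (p i / J + t) := by
          intro t ht
          set A : Matrix ι ι ℂ := ((J:ℂ)⁻¹) • ρ + ((t:ℝ):ℂ) • 1 with hAdef
          set B : Matrix ι ι ℂ := τ + ((t:ℝ):ℂ) • 1 with hBdef
          have hJC : ((J:ℂ)) = (((J:ℝ)):ℂ) := by push_cast; rfl
          have hone : ((t:ℝ):ℂ) • (1 : Matrix ι ι ℂ) = diagonal (fun _ => ((t:ℝ):ℂ)) :=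
            Matrix.smul_one_eq_diagonal _
          have hid_pd : (((t:ℝ):ℂ) • (1 : Matrix ι ι ℂ)).PosDef := by
            rw [hone]
            exact Matrix.posDef_diagonal_iff.mpr
              (fun _ => Complex.zero_lt_real.mpr ht)
          have hJinv_nonneg : (0:ℂ) ≤ (J:ℂ)⁻¹ := by
            rw [hJC, ← Complex.ofReal_inv]
            exact Complex.zero_le_real.mpr (inv_nonneg.mpr (le_of_lt hJR))
          have hsmulρ : ((J:ℂ)⁻¹ • ρ).PosSemidef := by
            refine Matrix.PosSemidef.of_dotProduct_mulVec_nonneg ?_ ?_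
            · show ((J:ℂ)⁻¹ • ρ)ᴴ = (J:ℂ)⁻¹ • ρ
              rw [conjTranspose_smul, hρH.eq]
              congr 1
              rw [hJC, ← Complex.ofReal_inv]
              exact Complex.conj_ofReal _
            · intro x
              rw [smul_mulVec, dotProduct_smul, smul_eq_mul]
              exact mul_nonneg hJinv_nonneg (hρ.dotProduct_mulVec_nonneg x)
          have hApd : A.PosDef := Matrix.PosDef.posSemidef_add hsmulρ hid_pd
          have hBpd : B.PosDef := Matrix.PosDef.posSemidef_add hτpsd hid_pd
          have hABle : ∀ x, star x ⬝ᵥ A *ᵥ x ≤ star x ⬝ᵥ B *ᵥ x := by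
            intro x
            rw [hAdef, hBdef, add_mulVec, add_mulVec, dotProduct_add, dotProduct_add]
            refine add_le_add_left ?_ _
            rw [smul_mulVec, dotProduct_smul, smul_eq_mul]
            have h1 := hpin x
            have hJne : ((J:ℂ)) ≠ 0 := by
              exact_mod_cast (Nat.cast_ne_zero (R := ℂ)).mpr hJ.ne'
            have h2 := mul_le_mul_of_nonneg_left h1 hJinv_nonneg
            rwa [← mul_assoc, inv_mul_cancel₀ hJne, one_mul] at h2
          have hkey := inv_antitone hApd hBpd hABle (v i)
          -- RHS evaluation
          have hAv : A *ᵥ v i = (((p i / J + t : ℝ)):ℂ) • v i := by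
            rw [hAdef, add_mulVec, smul_mulVec, hρv i, smul_mulVec,
              one_mulVec, smul_smul, ← add_smul]
            congr 1
            push_cast
            ring
          have hAdet : IsUnit A.det := (Matrix.isUnit_iff_isUnit_det A).mp hApd.isUnit
          have hspos : (0:ℝ) < p i / J + t := by positivity
          have hsne : (((p i / J + t : ℝ)):ℂ) ≠ 0 := by
            exact_mod_cast Complex.ofReal_ne_zero.mpr hspos.ne'
          have hAinvv : A⁻¹ *ᵥ v i = ((((p i / J + t : ℝ)):ℂ))⁻¹ • v i := by
            have h1 : A⁻¹ *ᵥ (A *ᵥ v i) = v i := by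
              rw [mulVec_mulVec, Matrix.nonsing_inv_mul A hAdet, one_mulVec]
            calc A⁻¹ *ᵥ v i
                = ((((p i / J + t : ℝ)):ℂ))⁻¹ • ((((p i / J + t : ℝ)):ℂ) • (A⁻¹ *ᵥ v i)) := by
                  rw [smul_smul, inv_mul_cancel₀ hsne, one_smul]
              _ = ((((p i / J + t : ℝ)):ℂ))⁻¹ • (A⁻¹ *ᵥ ((((p i / J + t : ℝ)):ℂ) • v i)) := by
                  rw [mulVec_smul]
              _ = ((((p i / J + t : ℝ)):ℂ))⁻¹ • (A⁻¹ *ᵥ (A *ᵥ v i)) := by rw [← hAv]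
              _ = ((((p i / J + t : ℝ)):ℂ))⁻¹ • v i := by rw [h1]
          have hRHS : star (v i) ⬝ᵥ A⁻¹ *ᵥ v i = (((p i / J + t : ℝ)):ℂ)⁻¹ := by
            rw [hAinvv, dotProduct_smul, hvunit i, smul_eq_mul, mul_one]
          -- LHS evaluation
          have hqt_ne : ∀ j, (((q j + t : ℝ)):ℂ) ≠ 0 := fun j =>
            Complex.ofReal_ne_zero.mpr (ne_of_gt (add_pos_of_nonneg_of_pos (hq_nonneg j) ht))
          have hτspec : τ = Wm * diagonal (RCLike.ofReal ∘ q) * Wmᴴ := by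
            rw [hWmdef, ← Matrix.star_eq_conjTranspose]
            exact hτH.spectral_theorem
          have hBspec : B = Wm * diagonal (fun j => ((q j + t : ℝ):ℂ)) * Wmᴴ := by
            rw [hBdef]
            conv_lhs => rw [hτspec]
            rw [hone]
            have hconst : diagonal (fun _ : ι => ((t:ℝ):ℂ))
                = Wm * diagonal (fun _ : ι => ((t:ℝ):ℂ)) * Wmᴴ := by
              rw [show diagonal (fun _ : ι => ((t:ℝ):ℂ)) = ((t:ℝ):ℂ) • 1 from
                (Matrix.smul_one_eq_diagonal _).symm]
              rw [Matrix.mul_smul, Matrix.mul_one, Matrix.smul_mul, hWW]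
            conv_lhs => rw [hconst]
            rw [← Matrix.add_mul, ← Matrix.mul_add, diagonal_add]
            congr 2
            funext j
            push_cast
            rfl
          have hBinv : B⁻¹ = Wm * diagonal (fun j => ((q j + t : ℝ):ℂ)⁻¹) * Wmᴴ := by
            apply Matrix.inv_eq_right_inv
            rw [hBspec]
            rw [Matrix.mul_assoc (Wm * diagonal (fun j => ((q j + t : ℝ):ℂ)))]
            rw [show Wmᴴ * (Wm * diagonal (fun j => ((q j + t : ℝ):ℂ)⁻¹) * Wmᴴ)
                = diagonal (fun j => ((q j + t : ℝ):ℂ)⁻¹) * Wmᴴ from by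
              rw [← Matrix.mul_assoc, ← Matrix.mul_assoc, hWW', Matrix.one_mul]]
            rw [Matrix.mul_assoc Wm, ← Matrix.mul_assoc (diagonal _),
              diagonal_mul_diagonal]
            rw [show (fun j => (((q j + t : ℝ)):ℂ) * ((q j + t : ℝ):ℂ)⁻¹) = fun _ => (1:ℂ) from
              funext fun j => mul_inv_cancel₀ (hqt_ne j)]
            rw [diagonal_one, Matrix.one_mul, hWW]
          have hLHS : star (v i) ⬝ᵥ B⁻¹ *ᵥ v i
              = ((∑ j, e j i / (q j + t) : ℝ) : ℂ) := by
            rw [hBinv, qf_diag]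
            push_cast
            refine Finset.sum_congr rfl fun j _ => ?_
            have h1 : (star ((Wmᴴ *ᵥ v i) j) * (Wmᴴ *ᵥ v i) j) = ((e j i : ℝ):ℂ) := by
              rw [hedef]
              simp only []
              rw [show (Wmᴴ *ᵥ v i) j = c i j from rfl, Complex.normSq_eq_conj_mul_self]
              rfl
            rw [h1]
            ring
          rw [hLHS, hRHS] at hkey
          rw [show ((((p i / J + t : ℝ)):ℂ))⁻¹ = (((p i / J + t)⁻¹ : ℝ):ℂ) from by
            push_cast; ring] at hkey
          have := Complex.real_le_real.mp hkey
          rw [one_div]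
          exact this
        have hz : ∀ j, q j = 0 → e j i = 0 := by
          intro j hqj
          have := hpe j i hqj
          rcases mul_eq_zero.mp this with h | h
          · exact absurd h (ne_of_gt h0)
          · exact h
        have key := scalar_key (fun j => e j i) q (p i / J) ha hq_nonneg hz (herow i) hcmp
        have hlog : Real.log (p i / J) = Real.log (p i) - Real.log J :=
          Real.log_div (ne_of_gt h0) (ne_of_gt hJR)
        rw [hlog] at key
        exact mul_le_mul_of_nonneg_left key (le_of_lt h0)
    have hsumu := Finset.sum_le_sum (fun i (_ : i ∈ Finset.univ) => hupp i)
    have hexp : ∑ i, p i * (Real.log (p i) - Real.log J)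
        = (∑ i, p i * Real.log (p i)) - Real.log J := by
      calc ∑ i, p i * (Real.log (p i) - Real.log J)
          = ∑ i, (p i * Real.log (p i) - p i * Real.log J) := by
            exact Finset.sum_congr rfl fun i _ => by ring
        _ = (∑ i, p i * Real.log (p i)) - (∑ i, p i) * Real.log J := by
            rw [Finset.sum_sub_distrib, Finset.sum_mul]
        _ = (∑ i, p i * Real.log (p i)) - Real.log J := by rw [hsum_p, one_mul]
    rw [hexp] at hsumu
    linarith
end
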